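/- Let x be a feasible Held–Karp solution (degree-2 constraints and subtour elimination) and let H, T₁,…,T_t be a comb with t odd whose comb inequality is violated: x(δ(H)) + Σᵢ x(δ(Tᵢ)) < 3t + 1. Then at most one tooth Tᵢ has x(δ(Tᵢ)) > 2; more precisely Σᵢ (x(δ(Tᵢ)) − 2) < 2. -/

import Mathlib

open Finset

variable {V : Type*} [Fintype V] [DecidableEq V]

/-- Total x-weight of edges leaving `S` (each crossing edge counted once, from inside to outside). -/
def cutVal (x : V → V → ℝ) (S : Finset V) : ℝ := ∑ i ∈ S, ∑ j ∈ Sᶜ, x i j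

/-- Total x-weight of edges between disjoint sets `A` and `B`. -/
def eVal (x : V → V → ℝ) (A B : Finset V) : ℝ := ∑ i ∈ A, ∑ j ∈ B, x i j

/-- The support graph of an edge weighting. -/
def support (x : V → V → ℝ) : SimpleGraph V where
  Adj i j := i ≠ j ∧ (0 < x i j ∨ 0 < x j i)
  symm := ⟨fun i j h => ⟨h.1.symm, h.2.symm⟩⟩
  loopless := ⟨fun i h => h.1 rfl⟩

/-- The weight-1/2 edges of `x` decompose into the edge-disjoint triangles `𝒯`. -/
def TriDecomp (x : V → V → ℝ) (𝒯 : Finset (Finset V)) : Prop :=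
  (∀ tr ∈ 𝒯, tr.card = 3) ∧
  (∀ tr ∈ 𝒯, ∀ i ∈ tr, ∀ j ∈ tr, i ≠ j → x i j = 1 / 2) ∧
  (∀ i j : V, i ≠ j → x i j = 1 / 2 → ∃! tr, tr ∈ 𝒯 ∧ i ∈ tr ∧ j ∈ tr)

lemma compl_split (A B : Finset V) (h : Disjoint A B) : Aᶜ = (A ∪ B)ᶜ ∪ B := by
  ext j
  simp only [mem_compl, mem_union]
  constructor
  · intro hj
    by_cases hjB : j ∈ B
    · exact Or.inr hjB
    · exact Or.inl (by tauto)
  · rintro (h1 | h2)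
    · exact fun hjA => h1 (Or.inl hjA)
    · exact fun hjA => (Finset.disjoint_left.mp h hjA) h2

lemma cutVal_union (x : V → V → ℝ) (hsym : ∀ i j, x i j = x j i)
    (A B : Finset V) (h : Disjoint A B) :
    cutVal x A + cutVal x B = cutVal x (A ∪ B) + 2 * eVal x A B := by
  have hdisj1 : Disjoint ((A ∪ B)ᶜ) B :=
    Finset.disjoint_left.mpr (fun j hj hjB => (mem_compl.mp hj) (mem_union_right A hjB))
  have hdisj2 : Disjoint ((A ∪ B)ᶜ) A :=
    Finset.disjoint_left.mpr (fun j hj hjA => (mem_compl.mp hj) (mem_union_left B hjA))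
  have hAc : ∀ i, ∑ j ∈ Aᶜ, x i j = ∑ j ∈ (A ∪ B)ᶜ, x i j + ∑ j ∈ B, x i j := by
    intro i
    rw [compl_split A B h, sum_union hdisj1]
  have hBc : ∀ i, ∑ j ∈ Bᶜ, x i j = ∑ j ∈ (A ∪ B)ᶜ, x i j + ∑ j ∈ A, x i j := by
    intro i
    rw [compl_split B A h.symm, union_comm B A, sum_union hdisj2]
  have hBA : ∑ i ∈ B, ∑ j ∈ A, x i j = ∑ i ∈ A, ∑ j ∈ B, x i j := by
    rw [Finset.sum_comm]
    exact Finset.sum_congr rfl fun i _ => Finset.sum_congr rfl fun j _ => hsym j i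
  unfold cutVal eVal
  rw [sum_union h]
  simp only [hAc, hBc, Finset.sum_add_distrib, hBA]
  ring

/-- In a violated comb, the total excess of teeth boundaries over 2 is less than 2; in
particular at most one tooth has boundary weight exceeding 2. -/
theorem violated_comb_teeth_excess
    (x : V → V → ℝ)
    (hsym : ∀ i j, x i j = x j i)
    (hdiag : ∀ i, x i i = 0)
    (hrange : ∀ i j, 0 ≤ x i j ∧ x i j ≤ 1)
    (hdeg : ∀ i : V, ∑ j, x i j = 2)
    (hsub : ∀ S : Finset V, S.Nonempty → S ≠ Finset.univ → 2 ≤ cutVal x S)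
    (H : Finset V) (t : ℕ) (ht : Odd t) (T : Fin t → Finset V)
    (hdisj : ∀ i j, i ≠ j → Disjoint (T i) (T j))
    (hteeth : ∀ i, ((T i) ∩ H).Nonempty ∧ ((T i) \ H).Nonempty)
    (hviol : cutVal x H + ∑ i, cutVal x (T i) < 3 * (t : ℝ) + 1) :
    ∑ i, (cutVal x (T i) - 2) < 2 := by
  classical
  set A : Fin t → Finset V := fun i => T i ∩ H with hA
  set B : Fin t → Finset V := fun i => T i \ H with hB
  have hABdisj : ∀ i, Disjoint (A i) (B i) := fun i =>
    Finset.disjoint_left.mpr (fun p hp hq => (mem_sdiff.mp hq).2 (mem_inter.mp hp).2)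
  have hABunion : ∀ i, A i ∪ B i = T i := fun i => by ext p; simp only [hA, hB, mem_union, mem_inter, mem_sdiff]; tauto
  have hxnn : ∀ i j, 0 ≤ x i j := fun i j => (hrange i j).1
  -- each tooth contributes at least 2 - cut(T i)/2 to the handle cut
  have key : ∀ i, 2 - cutVal x (T i) / 2 ≤ eVal x (A i) (B i) := by
    intro i
    have hAne : (A i).Nonempty := (hteeth i).1
    have hBne : (B i).Nonempty := (hteeth i).2
    have hAuniv : A i ≠ Finset.univ := by
      intro hEq
      obtain ⟨b, hb⟩ := hBne
      exact (Finset.disjoint_right.mp (hABdisj i) hb) (hEq ▸ mem_univ b)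
    have hBuniv : B i ≠ Finset.univ := by
      intro hEq
      obtain ⟨a, ha⟩ := hAne
      exact (Finset.disjoint_left.mp (hABdisj i) ha) (hEq ▸ mem_univ a)
    have h1 : 2 ≤ cutVal x (A i) := hsub _ hAne hAuniv
    have h2 : 2 ≤ cutVal x (B i) := hsub _ hBne hBuniv
    have h3 := cutVal_union x hsym (A i) (B i) (hABdisj i)
    rw [hABunion i] at h3
    linarith
  -- the handle cut dominates the sum of the tooth crossings
  have hHbound : ∑ i, eVal x (A i) (B i) ≤ cutVal x H := by
    have hstep1 : ∀ i, eVal x (A i) (B i) ≤ ∑ p ∈ A i, ∑ q ∈ Hᶜ, x p q := by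
      intro i
      refine Finset.sum_le_sum fun p _ => ?_
      refine Finset.sum_le_sum_of_subset_of_nonneg ?_ (fun q _ _ => hxnn p q)
      intro q hq
      exact mem_compl.mpr (mem_sdiff.mp hq).2
    calc ∑ i, eVal x (A i) (B i) ≤ ∑ i, ∑ p ∈ A i, ∑ q ∈ Hᶜ, x p q :=
          Finset.sum_le_sum fun i _ => hstep1 i
      _ = ∑ p ∈ Finset.univ.biUnion A, ∑ q ∈ Hᶜ, x p q := by
          rw [Finset.sum_biUnion]
          intro i _ j _ hij
          exact Finset.disjoint_left.mpr fun p hp hp' =>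
            Finset.disjoint_left.mp (hdisj i j hij) (mem_inter.mp hp).1 (mem_inter.mp hp').1
      _ ≤ ∑ p ∈ H, ∑ q ∈ Hᶜ, x p q := by
          refine Finset.sum_le_sum_of_subset_of_nonneg ?_
            (fun p _ _ => Finset.sum_nonneg fun q _ => hxnn p q)
          intro p hp
          obtain ⟨i, _, hpi⟩ := Finset.mem_biUnion.mp hp
          exact (mem_inter.mp hpi).2
      _ = cutVal x H := rfl
  have hsumkey : ∑ i : Fin t, (2 - cutVal x (T i) / 2) ≤ cutVal x H :=
    le_trans (Finset.sum_le_sum fun i _ => key i) hHbound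
  have hcard : (Finset.univ : Finset (Fin t)).card = t := Finset.card_univ.trans (Fintype.card_fin t)
  have h4 : ∑ i : Fin t, (2 - cutVal x (T i) / 2)
      = 2 * (t : ℝ) - (∑ i, cutVal x (T i)) / 2 := by
    rw [Finset.sum_sub_distrib, Finset.sum_const, hcard, Finset.sum_div]
    push_cast
    ring
  have h5 : ∑ i, (cutVal x (T i) - 2) = (∑ i, cutVal x (T i)) - 2 * (t : ℝ) := by
    rw [Finset.sum_sub_distrib, Finset.sum_const, hcard]
    push_cast
    ring
  rw [h4] at hsumkey
  rw [h5]
  linarith
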